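/- For the loop polynomial w = x1^{a1}x2 + x2^{a2}x3 + ... + x_{n-1}^{a_{n-1}}x_n + x_n^{a_n}x1, the group G_w = {(t1,...,tn) in (C*)^n : w(t1 x1, ..., tn xn) = w(x1,...,xn)} is a cyclic group of order a1*a2*...*an + (-1)^{n+1}. -/

import Mathlib

open Fin.NatCast

/-- Exponent sequence: `cexp m a k = (-1)^k * ∏_{i<k} a i`. -/
private def cexp (m : ℕ) (a : Fin (m + 2) → ℕ) : ℕ → ℤ
  | 0 => 1
  | k + 1 => -((a (k : Fin (m + 2)) : ℤ) * cexp m a k)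

private lemma cexp_formula (m : ℕ) (a : Fin (m + 2) → ℕ) (k : ℕ) :
    cexp m a k = (-1) ^ k * ∏ i ∈ Finset.range k, (a (i : Fin (m + 2)) : ℤ) := by
  induction k with
  | zero => simp [cexp]
  | succ k ih =>
      rw [cexp, ih, Finset.prod_range_succ]
      ring

/-- For the loop polynomial `w = x1^{a1}x2 + ⋯ + x_n^{a_n}x1` (with `n ≥ 2`, `a i ≥ 2`),
the group of diagonal symmetries
`G_w = {t ∈ (ℂ*)^n | t_i^{a_i} t_{i+1} = 1 for all i (cyclically)}`
is cyclic of order `a1⋯an + (-1)^{n+1}`.  (We write `n = m + 2` to encode `n ≥ 2`.) -/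
theorem loop_diagonal_symmetry_group_cyclic (m : ℕ) (a : Fin (m + 2) → ℕ)
    (ha : ∀ i, 2 ≤ a i) :
    ∃ H : Subgroup (Fin (m + 2) → ℂˣ),
      (H : Set (Fin (m + 2) → ℂˣ)) = {t | ∀ i : Fin (m + 2), t i ^ a i * t (i + 1) = 1} ∧
      IsCyclic H ∧
      (Nat.card H : ℤ) = (∏ i : Fin (m + 2), (a i : ℤ)) + (-1) ^ ((m + 2) + 1) := by
  classical
  set P : ℤ := ∏ i : Fin (m + 2), (a i : ℤ) with hPdef
  set V : ℤ := P + (-1) ^ ((m + 2) + 1) with hVdef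
  set M : ℤ := cexp m a (m + 2) - 1 with hMdef
  set N : ℕ := M.natAbs with hNdef
  -- the product over range n equals P
  have hprodrange : ∏ i ∈ Finset.range (m + 2), (a (i : Fin (m + 2)) : ℤ) = P := by
    rw [hPdef, ← Fin.prod_univ_eq_prod_range (fun k => (a (k : Fin (m + 2)) : ℤ)) (m + 2)]
    exact Finset.prod_congr rfl fun i _ => by rw [Fin.cast_val_eq_self]
  have hcn : cexp m a (m + 2) = (-1) ^ (m + 2) * P := by rw [cexp_formula, hprodrange]
  -- P ≥ 2
  have hP2 : (2 : ℤ) ≤ P := by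
    have h1 : (2 : ℤ) ^ (m + 2) ≤ P := by
      rw [hPdef]
      calc (2 : ℤ) ^ (m + 2) = ∏ _i : Fin (m + 2), (2 : ℤ) := by
            rw [Finset.prod_const, Finset.card_univ, Fintype.card_fin]
        _ ≤ ∏ i : Fin (m + 2), (a i : ℤ) := by
            apply Finset.prod_le_prod (fun i _ => by norm_num)
            intro i _
            exact_mod_cast ha i
    have h2 : (2 : ℤ) ≤ 2 ^ (m + 2) := by
      calc (2 : ℤ) = 2 ^ 1 := (pow_one 2).symm
        _ ≤ 2 ^ (m + 2) := pow_le_pow_right₀ (by norm_num) (by omega)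
    linarith
  have hsign : ((-1 : ℤ) ^ (m + 2)) * ((-1 : ℤ) ^ (m + 2 + 1)) = -1 := by
    rw [← pow_add]
    set n := m + 2 with hn
    have : Odd (n + n + 1) := ⟨n, by ring⟩
    rw [show m + 2 + (m + 2 + 1) = n + n + 1 by ring, this.neg_one_pow]
  have hMV : M = (-1) ^ (m + 2) * V := by
    rw [hMdef, hVdef, hcn]; rw [mul_add, hsign]; ring
  have hV1 : (1 : ℤ) ≤ V := by
    rw [hVdef]
    rcases Nat.even_or_odd (m + 2 + 1) with h | h
    · rw [h.neg_one_pow]; linarith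
    · rw [h.neg_one_pow]; linarith
  have hNV : (N : ℤ) = V := by
    rw [hNdef, hMV, Int.natAbs_mul]
    have h1 : ((-1 : ℤ) ^ (m + 2)).natAbs = 1 := by
      rcases Nat.even_or_odd (m + 2) with h | h
      · rw [h.neg_one_pow]; rfl
      · rw [h.neg_one_pow]; rfl
    rw [h1, one_mul, Int.natAbs_of_nonneg (by linarith)]
  have hNpos : 0 < N := by
    have := hNV; omega
  haveI : NeZero N := ⟨hNpos.ne'⟩
  -- z ^ N = 1 ↔ z ^ M = 1
  have hNM : ∀ z : ℂˣ, z ^ N = 1 ↔ z ^ M = 1 := by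
    intro z
    rw [← zpow_natCast]
    rcases Int.natAbs_eq M with h | h
    · rw [hNdef, ← h]
    · rw [hNdef, ← neg_neg ((M.natAbs : ℤ)), ← h, zpow_neg, inv_eq_one]
  -- the subgroup
  let H : Subgroup (Fin (m + 2) → ℂˣ) :=
    { carrier := {t | ∀ i : Fin (m + 2), t i ^ a i * t (i + 1) = 1}
      mul_mem' := by
        intro s t hs ht i
        simp only [Set.mem_setOf_eq, Pi.mul_apply, mul_pow] at *
        rw [mul_mul_mul_comm, hs i, ht i, mul_one]
      one_mem' := by intro i; simp
      inv_mem' := by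
        intro t ht i
        simp only [Set.mem_setOf_eq, Pi.inv_apply, inv_pow, ← mul_inv] at *
        rw [ht i, inv_one]
      }
  -- key lemma: elements are determined by their value at 0
  have key1 : ∀ t : Fin (m + 2) → ℂˣ, (∀ i : Fin (m + 2), t i ^ a i * t (i + 1) = 1) →
      ∀ k : ℕ, t (k : Fin (m + 2)) = t 0 ^ cexp m a k := by
    intro t ht k
    induction k with
    | zero => simp [cexp]
    | succ k ih =>
        have h1 := ht (k : Fin (m + 2))
        have h2 : t ((k : Fin (m + 2)) + 1) = (t (k : Fin (m + 2)) ^ a (k : Fin (m + 2)))⁻¹ :=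
          eq_inv_of_mul_eq_one_left (by rw [mul_comm]; exact h1)
        have h3 : ((k + 1 : ℕ) : Fin (m + 2)) = (k : Fin (m + 2)) + 1 := by push_cast; ring
        rw [h3, h2, ih, ← zpow_natCast, ← zpow_mul, ← zpow_neg, cexp]
        ring_nf
  have key1' : ∀ t : Fin (m + 2) → ℂˣ, (∀ i : Fin (m + 2), t i ^ a i * t (i + 1) = 1) →
      t 0 ^ M = 1 := by
    intro t ht
    have h1 := key1 t ht (m + 2)
    rw [show ((m + 2 : ℕ) : Fin (m + 2)) = 0 from Fin.natCast_self _] at h1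
    rw [hMdef, zpow_sub, zpow_one, ← h1]; simp
  -- converse: z with z^M = 1 gives an element
  have key2 : ∀ z : ℂˣ, z ^ M = 1 →
      ∀ i : Fin (m + 2), (z ^ cexp m a i.val) ^ a i * z ^ cexp m a (i + 1).val = 1 := by
    intro z hz i
    have hstep : z ^ cexp m a (i + 1).val = z ^ cexp m a (i.val + 1) := by
      by_cases hi : i = Fin.last (m + 1)
      · have h0 : (i + 1 : Fin (m + 2)) = 0 := by
          subst hi; simp
        have hiv : i.val + 1 = m + 2 := by subst hi; simp [Fin.last]
        rw [h0, hiv]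
        show z ^ cexp m a 0 = z ^ cexp m a (m + 2)
        have hc : cexp m a (m + 2) = M + 1 := by rw [hMdef]; ring
        rw [hc, zpow_add, hz, one_mul, cexp, zpow_one]
      · have hlt : (i : ℕ) < m + 1 := by
          have := Fin.val_lt_last hi
          simpa [Fin.last] using this
        have : ((i + 1 : Fin (m + 2)) : ℕ) = i.val + 1 := by
          rw [Fin.val_add_one_of_lt]
          exact Fin.lt_last_iff_ne_last.mpr hi
        rw [this]
    rw [hstep, ← zpow_natCast, ← zpow_mul, ← zpow_add]
    have hc : cexp m a (i.val + 1) = -((a i : ℤ) * cexp m a i.val) := by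
      rw [cexp, Fin.cast_val_eq_self]
    rw [hc,
      show cexp m a i.val * (a i : ℤ) + -((a i : ℤ) * cexp m a i.val) = 0 by ring,
      zpow_zero]
  -- the equivalence with rootsOfUnity N ℂ
  have hmem : ∀ t : Fin (m + 2) → ℂˣ,
      t ∈ H ↔ ∀ i : Fin (m + 2), t i ^ a i * t (i + 1) = 1 := fun t => Iff.rfl
  let e : H ≃* rootsOfUnity N ℂ :=
    { toFun := fun t => ⟨t.1 0, by
        rw [mem_rootsOfUnity, hNM]
        exact key1' t.1 ((hmem t.1).mp t.2)⟩
      invFun := fun z => ⟨fun i => z.1 ^ cexp m a i.val, by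
        rw [hmem]
        intro i
        exact key2 z.1 ((hNM z.1).mp ((mem_rootsOfUnity N z.1).mp z.2)) i⟩
      left_inv := fun t => by
        apply Subtype.ext
        funext i
        have h := key1 t.1 ((hmem t.1).mp t.2) i.val
        rw [Fin.cast_val_eq_self] at h
        exact h.symm
      right_inv := fun z => by
        apply Subtype.ext
        show z.1 ^ cexp m a (0 : Fin (m + 2)).val = z.1
        simp [cexp]
      map_mul' := fun s t => rfl }
  refine ⟨H, rfl, ?_, ?_⟩
  · exact isCyclic_of_surjective e.symm.toMonoidHom e.symm.surjective
  · rw [Nat.card_congr e.toEquiv,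
      Complex.card_rootsOfUnity N, hNV, hVdef]
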